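/- If y⃗ ∈ L satisfies y⃗ ≥ 0 and z⃗ ∈ L satisfies 0 ≤ z⃗ ≤ c⃗, then z⃗ + w⃗ − y⃗ ≱ 0 (i.e. z⃗ + w⃗ − y⃗ does not lie in L_+). -/

import Mathlib

open scoped BigOperators

namespace WPL

/-- The rank-one abelian group `L(p₁,…,p_t)`: the quotient of `ℤ^t` by the
subgroup generated by the elements `p 0 • e 0 - p i • e i`. -/
def rel (t : ℕ) [NeZero t] (p : Fin t → ℕ) : Submodule ℤ (Fin t → ℤ) :=
  Submodule.span ℤ
    { v | ∃ i : Fin t, v = (p 0 : ℤ) • Pi.single (0 : Fin t) (1 : ℤ) - (p i : ℤ) • Pi.single i (1 : ℤ) }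

/-- The group `L(p₁,…,p_t)`. -/
abbrev L (t : ℕ) [NeZero t] (p : Fin t → ℕ) : Type :=
  (Fin t → ℤ) ⧸ rel t p

/-- The generator `x⃗ᵢ` of `L`. -/
def xg (t : ℕ) [NeZero t] (p : Fin t → ℕ) (i : Fin t) : L t p :=
  Submodule.Quotient.mk (Pi.single i (1 : ℤ))

/-- The canonical element `c⃗ = p₁ • x⃗₁`. -/
noncomputable def cg (t : ℕ) [NeZero t] (p : Fin t → ℕ) : L t p :=
  (p 0 : ℤ) • xg t p 0

/-- `y ∈ L_+`, i.e. `y ≥ 0`: `y` is an ℕ-linear combination of the `x⃗ᵢ`. -/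
def pos (t : ℕ) [NeZero t] (p : Fin t → ℕ) (y : L t p) : Prop :=
  ∃ a : Fin t → ℕ, y = ∑ i, (a i : ℤ) • xg t p i

/-- The dualizing element `w⃗ = (t-2) • c⃗ - ∑ x⃗ᵢ`. -/
noncomputable def wg (t : ℕ) [NeZero t] (p : Fin t → ℕ) : L t p :=
  ((t : ℤ) - 2) • cg t p - ∑ i, xg t p i

/-- The dominant element `δ⃗ = c⃗ + 2 • w⃗`. -/
noncomputable def dg (t : ℕ) [NeZero t] (p : Fin t → ℕ) : L t p :=
  cg t p + 2 • wg t p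

end WPL

namespace WPL
variable (t : ℕ) [NeZero t] (p : Fin t → ℕ)

noncomputable def dAux : (Fin t → ℤ) →ₗ[ℤ] ℚ where
  toFun v := ∑ i, (v i : ℚ) / (p i : ℚ)
  map_add' u v := by
    rw [← Finset.sum_add_distrib]
    refine Finset.sum_congr rfl fun i _ => ?_
    push_cast [Pi.add_apply]
    ring
  map_smul' c v := by
    simp only [Pi.smul_apply, smul_eq_mul, RingHom.id_apply, zsmul_eq_mul, Finset.mul_sum]
    refine Finset.sum_congr rfl fun i _ => ?_
    push_cast
    ring

def eAux (j : Fin t) : (Fin t → ℤ) →ₗ[ℤ] ZMod (p j) where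
  toFun v := ((v j : ℤ) : ZMod (p j))
  map_add' u v := by push_cast [Pi.add_apply]; ring
  map_smul' c v := by
    simp only [Pi.smul_apply, smul_eq_mul, RingHom.id_apply, zsmul_eq_mul]
    push_cast
    ring

lemma dAux_single (j : Fin t) (c : ℤ) :
    dAux t p (Pi.single j c) = (c : ℚ) / (p j : ℚ) := by
  simp only [dAux, LinearMap.coe_mk, AddHom.coe_mk]
  rw [Fintype.sum_eq_single j (fun i hi => by simp [Pi.single_eq_of_ne hi])]
  simp

lemma smul_single_one (j : Fin t) (c : ℤ) :
    c • (Pi.single j (1 : ℤ) : Fin t → ℤ) = Pi.single j c := by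
  funext k
  simp [Pi.single_apply, mul_ite]

lemma rel_le_ker_d (hp : ∀ i, 2 ≤ p i) : rel t p ≤ LinearMap.ker (dAux t p) := by
  rw [rel, Submodule.span_le]
  rintro v ⟨i, rfl⟩
  have h0 : (p 0 : ℚ) ≠ 0 := by have := hp 0; positivity
  have hi : (p i : ℚ) ≠ 0 := by have := hp i; positivity
  simp only [SetLike.mem_coe, LinearMap.mem_ker, map_sub, smul_single_one t]
  rw [dAux_single t p, dAux_single t p]
  field_simp
  simp

lemma rel_le_ker_e (j : Fin t) : rel t p ≤ LinearMap.ker (eAux t p j) := by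
  rw [rel, Submodule.span_le]
  rintro v ⟨i, rfl⟩
  simp only [SetLike.mem_coe, LinearMap.mem_ker, map_sub, smul_single_one t, eAux,
    LinearMap.coe_mk, AddHom.coe_mk]
  rcases eq_or_ne j 0 with h0 | h0 <;> rcases eq_or_ne j i with hi | hi <;>
    subst_vars <;>
    simp [Pi.single_eq_same, Pi.single_eq_of_ne, *, zsmul_eq_mul, ZMod.natCast_self]

noncomputable def dmap (hp : ∀ i, 2 ≤ p i) : L t p →ₗ[ℤ] ℚ :=
  Submodule.liftQ (rel t p) (dAux t p) (rel_le_ker_d t p hp)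

def emap (j : Fin t) : L t p →ₗ[ℤ] ZMod (p j) :=
  Submodule.liftQ (rel t p) (eAux t p j) (rel_le_ker_e t p j)

lemma dmap_mk (hp : ∀ i, 2 ≤ p i) (v : Fin t → ℤ) :
    dmap t p hp (Submodule.Quotient.mk v) = ∑ i, (v i : ℚ) / (p i : ℚ) := rfl

lemma emap_mk (j : Fin t) (v : Fin t → ℤ) :
    emap t p j (Submodule.Quotient.mk v) = ((v j : ℤ) : ZMod (p j)) := rfl

lemma sum_xg_eq (a : Fin t → ℕ) :
    ∑ i, (a i : ℤ) • xg t p i = Submodule.Quotient.mk (fun j => (a j : ℤ)) := by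
  have h : (fun j => (a j : ℤ)) = ∑ i, (a i : ℤ) • Pi.single i (1 : ℤ) := by
    funext j
    simp [Finset.sum_apply, Pi.single_apply, Finset.sum_ite_eq']
  rw [h]
  simp only [xg, ← Submodule.mkQ_apply, ← map_smul, ← map_sum]

/-- the representative vector of `w⃗`. -/
noncomputable def wv : Fin t → ℤ :=
  fun j => ((t : ℤ) - 2) * (Pi.single (0 : Fin t) ((p 0 : ℤ)) : Fin t → ℤ) j - 1

lemma cg_eq_mk : cg t p = Submodule.Quotient.mk (Pi.single (0 : Fin t) ((p 0 : ℤ))) := by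
  rw [cg, xg, ← Submodule.mkQ_apply, ← map_smul, smul_single_one t]
  rfl

lemma wg_eq_mk : wg t p = Submodule.Quotient.mk (wv t p) := by
  have hsum : ∑ i, xg t p i = Submodule.Quotient.mk (fun _ : Fin t => (1 : ℤ)) := by
    have := sum_xg_eq t p (fun _ => 1)
    simpa using this
  rw [wg, cg_eq_mk, hsum, ← Submodule.mkQ_apply, ← Submodule.mkQ_apply, ← map_smul, ← map_sub]
  exact congrArg _ (funext fun j => by simp [wv, Pi.smul_apply, smul_eq_mul])

end WPL


set_option maxHeartbeats 1000000 in
open WPL in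
/-- if `y⃗ ≥ 0` and `0 ≤ z⃗ ≤ c⃗` then `z⃗ + w⃗ - y⃗ ≱ 0`. -/
theorem not_pos_add_w_sub
    (t : ℕ) [NeZero t] (ht : 3 ≤ t) (p : Fin t → ℕ) (hp : ∀ i, 2 ≤ p i)
    (y z : L t p) (hy : pos t p y) (hz : pos t p z) (hzc : pos t p (cg t p - z)) :
    ¬ pos t p (z + wg t p - y) := by
  rintro ⟨a, ha⟩
  obtain ⟨b, hb⟩ := hy
  obtain ⟨m, hm⟩ := hz
  obtain ⟨n, hn⟩ := hzc
  rw [sum_xg_eq] at ha hb hm hn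
  have hq : ∀ j, (p j : ℚ) ≠ 0 := fun j => by have := hp j; positivity
  -- the two key equations in L, as equalities of `mk`s
  have E1 : (Submodule.Quotient.mk (fun j => (m j : ℤ)) : L t p)
      + Submodule.Quotient.mk (wv t p) - Submodule.Quotient.mk (fun j => (b j : ℤ))
      = Submodule.Quotient.mk (fun j => (a j : ℤ)) := by
    rw [← hm, ← wg_eq_mk, ← hb, ← ha]
  have E2 : (Submodule.Quotient.mk (Pi.single (0 : Fin t) ((p 0 : ℤ))) : L t p)
      = Submodule.Quotient.mk (fun j => (m j : ℤ)) + Submodule.Quotient.mk (fun j => (n j : ℤ)) := by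
    rw [← hm, ← hn, ← cg_eq_mk]
    abel
  -- apply the mod-p_j invariants
  have he1 : ∀ j, (p j : ℤ) ∣ ((a j : ℤ) + (b j : ℤ) + 1 - (m j : ℤ)) := by
    intro j
    haveI : NeZero (p j) := ⟨by have := hp j; omega⟩
    have h := congrArg (emap t p j) E1
    rw [map_sub, map_add] at h
    simp only [emap_mk] at h
    have hw : ((wv t p j : ℤ) : ZMod (p j)) = -1 := by
      rcases eq_or_ne j 0 with h0 | h0
      · subst h0
        push_cast [wv, Pi.single_eq_same]
        simp [ZMod.natCast_self]
      · push_cast [wv, Pi.single_eq_of_ne h0]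
        ring
    rw [hw] at h
    push_cast at h
    rw [← ZMod.intCast_zmod_eq_zero_iff_dvd]
    push_cast
    linear_combination -h
  have he2 : ∀ j, (p j : ℤ) ∣ ((m j : ℤ) + (n j : ℤ)) := by
    intro j
    haveI : NeZero (p j) := ⟨by have := hp j; omega⟩
    have h := congrArg (emap t p j) E2
    rw [map_add] at h
    simp only [emap_mk] at h
    have hc : (((Pi.single (0 : Fin t) ((p 0 : ℤ)) : Fin t → ℤ) j : ℤ) : ZMod (p j)) = 0 := by
      rcases eq_or_ne j 0 with h0 | h0
      · subst h0
        simp [Pi.single_eq_same, ZMod.natCast_self]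
      · simp [Pi.single_eq_of_ne h0]
    rw [hc] at h
    push_cast at h
    rw [← ZMod.intCast_zmod_eq_zero_iff_dvd]
    push_cast
    linear_combination -h
  choose k hk using he1
  choose s hs using he2
  -- apply the degree invariant
  have hd1 := congrArg (dmap t p hp) E1
  rw [map_sub, map_add] at hd1
  simp only [dmap_mk] at hd1
  push_cast at hd1
  have hd2 := congrArg (dmap t p hp) E2
  rw [map_add] at hd2
  simp only [dmap_mk] at hd2
  push_cast at hd2
  -- sum of w-vector entries over p
  have hsumw : ∑ j, ((wv t p j : ℚ)) / (p j : ℚ)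
      = ((t : ℚ) - 2) - ∑ j, 1 / (p j : ℚ) := by
    have h1 : ∀ j : Fin t, ((wv t p j : ℚ)) / (p j : ℚ)
        = (if j = 0 then ((t : ℚ) - 2) else 0) - 1 / (p j : ℚ) := by
      intro j
      rcases eq_or_ne j 0 with h0 | h0
      · subst h0
        have h0q := hq 0
        push_cast [wv, Pi.single_eq_same]
        rw [if_pos rfl]
        field_simp
      · push_cast [wv, Pi.single_eq_of_ne h0]
        rw [if_neg h0]
        ring
    rw [Finset.sum_congr rfl (fun j _ => h1 j), Finset.sum_sub_distrib]
    simp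
  -- sum of k's equals t - 2
  have hsumk : ∑ j, k j = (t : ℤ) - 2 := by
    have hterm : ∀ j : Fin t, ((k j : ℚ))
        = (a j : ℚ) / (p j : ℚ) + (b j : ℚ) / (p j : ℚ) + 1 / (p j : ℚ) - (m j : ℚ) / (p j : ℚ) := by
      intro j
      have := hk j
      have hcast : ((a j : ℚ) + (b j : ℚ) + 1 - (m j : ℚ)) = (p j : ℚ) * (k j : ℚ) := by
        exact_mod_cast congrArg (fun x : ℤ => (x : ℚ)) this
      have hpj := hq j
      field_simp
      linarith [hcast]
    have : ((∑ j, k j : ℤ) : ℚ) = (t : ℚ) - 2 := by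
      push_cast
      rw [Finset.sum_congr rfl (fun j _ => hterm j)]
      simp only [Finset.sum_sub_distrib, Finset.sum_add_distrib]
      rw [hsumw] at hd1
      linarith [hd1]
    exact_mod_cast this
  -- sum of s's equals 1
  have hsums : ∑ j, s j = 1 := by
    have hterm : ∀ j : Fin t, ((s j : ℚ)) = (m j : ℚ) / (p j : ℚ) + (n j : ℚ) / (p j : ℚ) := by
      intro j
      have := hs j
      have hcast : ((m j : ℚ) + (n j : ℚ)) = (p j : ℚ) * (s j : ℚ) := by
        exact_mod_cast congrArg (fun x : ℤ => (x : ℚ)) this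
      have hpj := hq j
      field_simp
      linarith [hcast]
    have hsingle : ∑ j, (((Pi.single (0 : Fin t) ((p 0 : ℤ)) : Fin t → ℤ) j : ℚ)) / (p j : ℚ) = 1 := by
      rw [Fintype.sum_eq_single (0 : Fin t) (fun i hi => by simp [Pi.single_eq_of_ne hi])]
      rw [Pi.single_eq_same]
      push_cast
      exact div_self (hq 0)
    have : ((∑ j, s j : ℤ) : ℚ) = 1 := by
      push_cast
      rw [Finset.sum_congr rfl (fun j _ => hterm j), Finset.sum_add_distrib]
      rw [hsingle] at hd2
      linarith [hd2]
    exact_mod_cast this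
  -- s j are nonnegative and at most 1
  have hs0 : ∀ j, 0 ≤ s j := by
    intro j
    by_contra h
    push_neg at h
    have h1 := hs j
    have h2 : (2 : ℤ) ≤ (p j : ℤ) := by exact_mod_cast hp j
    nlinarith [Int.natCast_nonneg (m j), Int.natCast_nonneg (n j)]
  have hs1 : ∀ j, s j ≤ 1 := by
    intro j
    have := Finset.single_le_sum (f := s) (fun i _ => hs0 i) (Finset.mem_univ j)
    omega
  -- key lower bound on k
  have hklb : ∀ j : Fin t, 1 - s j ≤ k j := by
    intro j
    have h2 : (2 : ℤ) ≤ (p j : ℤ) := by exact_mod_cast hp j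
    have hkj := hk j
    have hsj := hs j
    rcases (hs0 j).lt_or_eq with hpos | hzero
    · -- s j = 1, so m j ≤ p j; show 0 ≤ k j
      have hsj1 : s j = 1 := le_antisymm (hs1 j) hpos
      rw [hsj1] at hsj
      have hm : (m j : ℤ) ≤ (p j : ℤ) := by
        have := Int.natCast_nonneg (n j); omega
      have : -1 < k j := by
        nlinarith [Int.natCast_nonneg (a j), Int.natCast_nonneg (b j)]
      omega
    · -- s j = 0, so m j = 0; show 1 ≤ k j
      rw [← hzero] at hsj
      simp at hsj
      have hmz : (m j : ℤ) = 0 := by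
        have := Int.natCast_nonneg (m j); have := Int.natCast_nonneg (n j); omega
      have : 0 < k j := by
        nlinarith [Int.natCast_nonneg (a j), Int.natCast_nonneg (b j)]
      omega
  -- conclude
  have hbnd : (t : ℤ) - (∑ j, s j) ≤ ∑ j, k j := by
    calc (t : ℤ) - ∑ j, s j = ∑ j : Fin t, (1 - s j) := by
          rw [Finset.sum_sub_distrib]
          simp [Finset.card_univ]
      _ ≤ ∑ j, k j := Finset.sum_le_sum (fun j _ => hklb j)
  rw [hsums, hsumk] at hbnd
  omega
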